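/- arXiv:1904.12479 — 2 statements merged into one kernel-verified Lean document; each statement's English description precedes it below -/
import Mathlib

section
/- Let v : ℤ → ℝ² be defined by v m = (m-1, -m) for m ≥ 0 and v m = (-m-1, m+2) for m < 0, and for m ∈ ℤ let K m = {a • v m + b • v (m+1) | a, b ≥ 0}. Then for every integer k > 0, the point (k, -k) does not belong to ⋃_{m ∈ ℤ} K m. -/
noncomputable def v (m : ℤ) : ℝ × ℝ :=
  if 0 ≤ m then ((m : ℝ) - 1, -(m : ℝ)) else (-(m : ℝ) - 1, (m : ℝ) + 2)

noncomputable def K (m : ℤ) : Set (ℝ × ℝ) :=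
  {x | ∃ a b : ℝ, 0 ≤ a ∧ 0 ≤ b ∧ x = a • v m + b • v (m + 1)}

theorem stmt_2 (k : ℤ) (hk : 0 < k) :
    (((k : ℝ), -(k : ℝ)) : ℝ × ℝ) ∉ ⋃ m : ℤ, K m := by
  intro h
  simp only [Set.mem_iUnion, K, Set.mem_setOf_eq] at h
  obtain ⟨m, a, b, ha, hb, hx⟩ := h
  have hk' : (0:ℝ) < k := by exact_mod_cast hk
  rcases lt_trichotomy m (-1) with hm | hm | hm
  · -- m ≤ -2, both m < 0 and m+1 < 0
    have h1 : ¬ (0 ≤ m) := by omega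
    have h2 : ¬ (0 ≤ m + 1) := by omega
    simp only [v, h1, h2, if_false, Prod.smul_mk, smul_eq_mul, Prod.mk_add_mk,
      Prod.ext_iff] at hx
    obtain ⟨e1, e2⟩ := hx
    push_cast at e1 e2
    have hab : a + b = 0 := by linear_combination -e1 - e2
    have ha0 : a = 0 := by linarith
    have hb0 : b = 0 := by linarith
    rw [ha0, hb0] at e1
    simp at e1
    linarith
  · -- m = -1
    subst hm
    norm_num [v, Prod.ext_iff] at hx
    obtain ⟨e1, e2⟩ := hx
    linarith
  · -- m ≥ 0
    have h1 : (0 : ℤ) ≤ m := by omega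
    have h2 : (0 : ℤ) ≤ m + 1 := by omega
    simp only [v, h1, h2, if_true, if_pos, Prod.smul_mk, smul_eq_mul, Prod.mk_add_mk,
      Prod.ext_iff] at hx
    obtain ⟨e1, e2⟩ := hx
    push_cast at e1 e2
    have hab : a + b = 0 := by linear_combination e1 + e2
    have ha0 : a = 0 := by linarith
    have hb0 : b = 0 := by linarith
    rw [ha0, hb0] at e1
    simp at e1
    linarith
end

section
/- Let v : ℤ → ℝ² and K m be as follows: v m = (m-1, -m) for m ≥ 0, v m = (-m-1, m+2) for m < 0, and K m = {a • v m + b • v (m+1) | a, b ≥ 0}. Then every pair of integers (a, b) ∈ ℤ² satisfying ¬(a > 0 ∧ b = -a) lies in ⋃_{m ∈ ℤ} K m. Moreover, the closure of ⋃_{m ∈ ℤ} K m equals all of ℝ². -/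
lemma v_of_nonneg (m : ℤ) (h : 0 ≤ m) : v m = ((m : ℝ) - 1, -(m : ℝ)) := if_pos h

lemma v_of_neg (m : ℤ) (h : m < 0) : v m = (-(m : ℝ) - 1, (m : ℝ) + 2) :=
  if_neg (not_le.2 h)

lemma mem_union_of (x y : ℝ) (h : ¬(0 < x ∧ y = -x)) :
    ((x, y) : ℝ × ℝ) ∈ ⋃ m : ℤ, K m := by
  have hmem : ∀ (m : ℤ) (a b : ℝ), 0 ≤ a → 0 ≤ b →
      ((x, y) : ℝ × ℝ) = a • v m + b • v (m + 1) →
      ((x, y) : ℝ × ℝ) ∈ ⋃ m : ℤ, K m := fun m a b ha hb he =>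
    Set.mem_iUnion.2 ⟨m, a, b, ha, hb, he⟩
  rcases le_or_gt x 0 with hx | hx
  · rcases le_or_gt 0 y with hy | hy
    · -- second quadrant : K (-1)
      apply hmem (-1) y (-x) hy (by linarith)
      rw [show (-1 : ℤ) + 1 = 0 by ring, v_of_neg (-1) (by omega), v_of_nonneg 0 le_rfl]
      simp only [Prod.smul_mk, smul_eq_mul, Prod.mk_add_mk, Prod.mk.injEq]
      norm_num
    · -- third quadrant : K 0
      apply hmem 0 (-x) (-y) (by linarith) (by linarith)
      rw [show (0:ℤ) + 1 = 1 by norm_num, v_of_nonneg 0 le_rfl, v_of_nonneg 1 (by omega)]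
      simp only [Prod.smul_mk, smul_eq_mul, Prod.mk_add_mk, Prod.mk.injEq]
      norm_num
  · rcases le_or_gt 0 y with hy | hy
    · -- first quadrant : K (-2)
      apply hmem (-2) x y hx.le hy
      rw [show (-2 : ℤ) + 1 = -1 by ring, v_of_neg (-2) (by omega), v_of_neg (-1) (by omega)]
      simp only [Prod.smul_mk, smul_eq_mul, Prod.mk_add_mk, Prod.mk.injEq]
      norm_num
    · rcases lt_trichotomy (x + y) 0 with hxy | hxy | hxy
      · -- below the diagonal : K m for m = ⌈x / s⌉, s = -(x+y)
        set s : ℝ := -(x + y) with hs_def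
        have hs : 0 < s := by rw [hs_def]; linarith
        set m : ℤ := ⌈x / s⌉ with hm_def
        have hm0 : 0 < m := Int.ceil_pos.2 (div_pos hx hs)
        have h1 : x ≤ (m : ℝ) * s := by
          have := Int.le_ceil (x / s)
          rw [div_le_iff₀ hs] at this
          exact this
        have h2 : (m : ℝ) * s < x + s := by
          have hc : (m : ℝ) < x / s + 1 := Int.ceil_lt_add_one (x / s)
          have hx' : x / s * s = x := div_mul_cancel₀ x hs.ne'
          have := mul_lt_mul_of_pos_right hc hs
          rw [add_mul, hx', one_mul] at this
          exact this
        apply hmem m ((m : ℝ) * s - x) (x + s - (m : ℝ) * s) (by linarith) (by linarith)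
        rw [v_of_nonneg m hm0.le, v_of_nonneg (m + 1) (by omega)]
        simp only [Prod.smul_mk, smul_eq_mul, Prod.mk_add_mk, Prod.mk.injEq]
        rw [hs_def]
        push_cast
        constructor <;> ring
      · -- on the ray : excluded
        exact absurd ⟨hx, by linarith⟩ h
      · -- above the diagonal : K (-n-2) for n = ⌈-y / t⌉, t = x+y
        set t : ℝ := x + y with ht_def
        have ht : 0 < t := hxy
        set n : ℤ := ⌈-y / t⌉ with hn_def
        have hn0 : 0 < n := Int.ceil_pos.2 (div_pos (by linarith) ht)
        have h1 : -y ≤ (n : ℝ) * t := by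
          have := Int.le_ceil (-y / t)
          rw [div_le_iff₀ ht] at this
          exact this
        have h2 : (n : ℝ) * t < -y + t := by
          have hc : (n : ℝ) < -y / t + 1 := Int.ceil_lt_add_one (-y / t)
          have hy' : -y / t * t = -y := div_mul_cancel₀ (-y) ht.ne'
          have := mul_lt_mul_of_pos_right hc ht
          rw [add_mul, hy', one_mul] at this
          exact this
        apply hmem (-n - 2) (x - (n : ℝ) * t) (y + (n : ℝ) * t)
          (by rw [ht_def] at h2 ⊢; linarith) (by linarith)
        rw [v_of_neg (-n - 2) (by omega), v_of_neg (-n - 2 + 1) (by omega)]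
        simp only [Prod.smul_mk, smul_eq_mul, Prod.mk_add_mk, Prod.mk.injEq]
        rw [ht_def]
        push_cast
        constructor <;> ring

theorem stmt_3 :
    (∀ a b : ℤ, ¬(0 < a ∧ b = -a) →
      (((a : ℝ), (b : ℝ)) : ℝ × ℝ) ∈ ⋃ m : ℤ, K m) ∧
    closure (⋃ m : ℤ, K m) = (Set.univ : Set (ℝ × ℝ)) := by
  constructor
  · intro a b hab
    apply mem_union_of
    rintro ⟨h1, h2⟩
    exact hab ⟨by exact_mod_cast h1, by exact_mod_cast h2⟩
  · apply Set.eq_univ_of_forall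
    intro p
    by_cases hp : p.1 + p.2 = 0
    · rw [mem_closure_iff_seq_limit]
      refine ⟨fun n => (p.1 + 1 / (n + 1 : ℝ), p.2), fun n => ?_, ?_⟩
      · have hpos : (0 : ℝ) < 1 / (n + 1 : ℝ) := by positivity
        have : ¬(0 < p.1 + 1 / (n + 1 : ℝ) ∧ p.2 = -(p.1 + 1 / (n + 1 : ℝ))) := by
          rintro ⟨-, h2⟩
          nlinarith
        exact mem_union_of _ _ this
      · have h1 : Filter.Tendsto (fun n : ℕ => (1 : ℝ) / (n + 1)) Filter.atTop (nhds 0) :=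
          tendsto_one_div_add_atTop_nhds_zero_nat
        have h2 : Filter.Tendsto (fun n : ℕ => p.1 + 1 / (n + 1 : ℝ)) Filter.atTop
            (nhds (p.1 + 0)) := Filter.Tendsto.const_add _ h1
        rw [add_zero] at h2
        have := h2.prodMk_nhds (tendsto_const_nhds (x := p.2) (f := Filter.atTop (α := ℕ)))
        simpa using this
    · have : ¬(0 < p.1 ∧ p.2 = -p.1) := by
        rintro ⟨-, h2⟩
        apply hp
        rw [h2]; ring
      exact subset_closure (by simpa using mem_union_of p.1 p.2 this)
end
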